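/- Let n ≥ 5 and let ε ∈ Aut Dₙ have order 3. Then ε ∈ W(Dₙ), and rank Dₙ^ε = n − 2c for some integer c with 1 ≤ c ≤ n/3. Moreover, if ε₁, ε₂ ∈ Aut Dₙ both have order 3 and rank Dₙ^{ε₁} = rank Dₙ^{ε₂}, then ε₁ and ε₂ are conjugate by an element of W(Dₙ). -/

import Mathlib

section Infra
variable {L : Type*} [AddCommGroup L]

/-- The multiplicative group structure (composition) on `AddAut L`, as in the older Mathlib. -/
instance addAutGroupComp {M : Type*} [Add M] : Group (AddAut M) where
  mul g h := AddEquiv.trans h g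
  one := AddEquiv.refl _
  inv := AddEquiv.symm
  mul_assoc _ _ _ := rfl
  one_mul _ := rfl
  mul_one _ := rfl
  inv_mul_cancel := AddEquiv.self_trans_symm

/-- The subgroup of fixed points of an automorphism of an abelian group. -/
def fixedPts (f : AddAut L) : AddSubgroup L where
  carrier := {x | f x = x}
  add_mem' := by
    intro a b ha hb
    simp only [Set.mem_setOf_eq, map_add] at *
    rw [ha, hb]
  zero_mem' := by simp
  neg_mem' := by
    intro a ha
    simp only [Set.mem_setOf_eq, map_neg] at *
    rw [ha]

/-- The isometry group of a `ℤ`-valued form: the group of all automorphisms of the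
additive group preserving the form.  For a lattice `(L, B)` this is `Aut L`. -/
def IsometryGrp (B : L → L → ℤ) : Subgroup (AddAut L) where
  carrier := {f | ∀ x y, B (f x) (f y) = B x y}
  one_mem' := by intro x y; rfl
  mul_mem' := by
    intro a b ha hb x y
    have h : ∀ z, (a * b) z = a (b z) := fun z => rfl
    simp only [Set.mem_setOf_eq] at *
    rw [h, h, ha, hb]
  inv_mem' := by
    intro a ha x y
    simp only [Set.mem_setOf_eq] at *
    have h := ha (a⁻¹ x) (a⁻¹ y)
    have h1 : a (a⁻¹ x) = x := a.apply_symm_apply x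
    have h2 : a (a⁻¹ y) = y := a.apply_symm_apply y
    rw [h1, h2] at h
    exact h.symm

/-- The Weyl group of a lattice `(L, B)`: the subgroup generated by the reflections
`r_α : x ↦ x − B(x,α)•α` in the norm-2 vectors `α`. -/
def WeylGrp (B : L → L → ℤ) : Subgroup (AddAut L) :=
  Subgroup.closure {w | ∃ α : L, B α α = 2 ∧ ∀ x, w x = x - B x α • α}

/-- The root lattice of `(L, B)`: the subgroup generated by the norm-2 vectors. -/
def rootLat (B : L → L → ℤ) : AddSubgroup L :=
  AddSubgroup.closure {α | B α α = 2}

/-- The rank of the fixed-point sublattice of an automorphism. -/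
noncomputable def fixedRank (f : AddAut L) : ℕ :=
  Module.finrank ℤ ↥(fixedPts f)

end Infra

/-- An isomorphism of lattices: an isomorphism of the underlying abelian groups
(equivalently, a `ℤ`-linear isomorphism) preserving the forms. -/
def FormIso {M N : Type*} [AddCommGroup M] [AddCommGroup N]
    (BM : M → M → ℤ) (BN : N → N → ℤ) : Prop :=
  ∃ e : M ≃+ N, ∀ x y, BN (e x) (e y) = BM x y

/-- The standard dot product on `ι → ℤ`. -/
def dotF {ι : Type*} [Fintype ι] (x y : ι → ℤ) : ℤ := ∑ i, x i * y i

/-- The root lattice `Aₙ ⊆ ℤ^{n+1}`. -/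
def AnS (n : ℕ) : AddSubgroup (Fin (n + 1) → ℤ) where
  carrier := {x | ∑ i, x i = 0}
  add_mem' := by
    intro a b ha hb
    simp only [Set.mem_setOf_eq, Pi.add_apply, Finset.sum_add_distrib] at *
    rw [ha, hb]; ring
  zero_mem' := by simp
  neg_mem' := by
    intro a ha
    simp only [Set.mem_setOf_eq, Pi.neg_apply, Finset.sum_neg_distrib] at *
    rw [ha]; ring

/-- The root lattice `Dₙ ⊆ ℤⁿ`. -/
def DnS (n : ℕ) : AddSubgroup (Fin n → ℤ) where
  carrier := {x | (2 : ℤ) ∣ ∑ i, x i}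
  add_mem' := by
    intro a b ha hb
    simp only [Set.mem_setOf_eq, Pi.add_apply, Finset.sum_add_distrib] at *
    exact dvd_add ha hb
  zero_mem' := by simp
  neg_mem' := by
    intro a ha
    simp only [Set.mem_setOf_eq, Pi.neg_apply, Finset.sum_neg_distrib] at *
    exact ha.neg_right

/-- The inner product on a root lattice, restricted from the ambient dot product. -/
def rootF {n : ℕ} (S : AddSubgroup (Fin n → ℤ)) (x y : ↥S) : ℤ := dotF x.val y.val


namespace Dn8
open Equiv Finset

variable {n : ℕ}

lemma mem_DnS {v : Fin n → ℤ} : v ∈ DnS n ↔ (2:ℤ) ∣ ∑ i, v i := Iff.rfl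

lemma rootF_def (x y : ↥(DnS n)) : rootF (DnS n) x y = ∑ i, x.1 i * y.1 i := rfl

lemma mem_iso_iff {f : AddAut ↥(DnS n)} :
    f ∈ IsometryGrp (rootF (DnS n)) ↔
      ∀ x y, rootF (DnS n) (f x) (f y) = rootF (DnS n) x y := Iff.rfl

lemma mem_fixed_iff {L : Type*} [AddCommGroup L] {f : AddAut L} {x : L} :
    x ∈ fixedPts f ↔ f x = x := Iff.rfl

/-- sign vectors -/
def Sgn (s : Fin n → ℤ) : Prop := ∀ i, s i = 1 ∨ s i = -1

lemma Sgn.sq {s : Fin n → ℤ} (hs : Sgn s) (i : Fin n) : s i * s i = 1 := by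
  rcases hs i with h | h <;> rw [h] <;> ring

def spFun (s : Fin n → ℤ) (π : Equiv.Perm (Fin n)) (v : Fin n → ℤ) : Fin n → ℤ :=
  fun j => s (π.symm j) * v (π.symm j)

lemma spFun_sum (s : Fin n → ℤ) (π : Equiv.Perm (Fin n)) (v : Fin n → ℤ) :
    ∑ j, spFun s π v j = ∑ i, s i * v i :=
  Equiv.sum_comp π.symm (fun i => s i * v i)

lemma spFun_mem {s : Fin n → ℤ} {π : Equiv.Perm (Fin n)} (hs : Sgn s) {v : Fin n → ℤ}
    (hv : v ∈ DnS n) : spFun s π v ∈ DnS n := by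
  rw [mem_DnS, spFun_sum]
  have h1 : ∑ i, s i * v i = ∑ i, v i + ∑ i, (s i - 1) * v i := by
    rw [← Finset.sum_add_distrib]
    exact Finset.sum_congr rfl fun i _ => by ring
  rw [h1]
  refine dvd_add (mem_DnS.1 hv) (Finset.dvd_sum fun i _ => ?_)
  rcases hs i with h | h <;> rw [h]
  · exact ⟨0, by ring⟩
  · exact ⟨-v i, by ring⟩

/-- the signed permutation automorphism of `Dₙ` -/
def mkIso (s : Fin n → ℤ) (π : Equiv.Perm (Fin n)) (hs : Sgn s) : AddAut ↥(DnS n) where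
  toFun x := ⟨spFun s π x.1, spFun_mem hs x.2⟩
  invFun x := ⟨spFun (fun m => s (π.symm m)) π.symm x.1,
    spFun_mem (fun m => hs (π.symm m)) x.2⟩
  left_inv x := Subtype.ext <| funext fun j => by
    show spFun (fun m => s (π.symm m)) π.symm (spFun s π x.1) j = x.1 j
    simp only [spFun, Equiv.symm_symm, Equiv.symm_apply_apply]
    rw [← mul_assoc, hs.sq, one_mul]
  right_inv x := Subtype.ext <| funext fun j => by
    show spFun s π (spFun (fun m => s (π.symm m)) π.symm x.1) j = x.1 j
    simp only [spFun, Equiv.symm_symm, Equiv.symm_apply_apply, Equiv.apply_symm_apply]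
    rw [← mul_assoc, hs.sq, one_mul]
  map_add' x y := Subtype.ext <| funext fun j => by
    show spFun s π (x.1 + y.1) j = spFun s π x.1 j + spFun s π y.1 j
    simp only [spFun, Pi.add_apply]
    ring

lemma mkIso_apply_coe (s : Fin n → ℤ) (π : Equiv.Perm (Fin n)) (hs : Sgn s) (x : ↥(DnS n))
    (j : Fin n) : ((mkIso s π hs x : ↥(DnS n)) : Fin n → ℤ) j = s (π.symm j) * x.1 (π.symm j) :=
  rfl

lemma mkIso_mem (s : Fin n → ℤ) (π : Equiv.Perm (Fin n)) (hs : Sgn s) :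
    mkIso s π hs ∈ IsometryGrp (rootF (DnS n)) := by
  rw [mem_iso_iff]
  intro x y
  rw [rootF_def, rootF_def]
  have : ∀ j : Fin n, (mkIso s π hs x).1 j * (mkIso s π hs y).1 j =
      (fun i => x.1 i * y.1 i) (π.symm j) := by
    intro j
    show (s (π.symm j) * x.1 (π.symm j)) * (s (π.symm j) * y.1 (π.symm j)) = _
    dsimp only
    calc (s (π.symm j) * x.1 (π.symm j)) * (s (π.symm j) * y.1 (π.symm j))
        = (s (π.symm j) * s (π.symm j)) * (x.1 (π.symm j) * y.1 (π.symm j)) := by ring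
      _ = x.1 (π.symm j) * y.1 (π.symm j) := by rw [hs.sq, one_mul]
  rw [Finset.sum_congr rfl fun j _ => this j]
  exact Equiv.sum_comp π.symm (fun i => x.1 i * y.1 i)

lemma mkIso_mul (s₂ s₁ : Fin n → ℤ) (π₂ π₁ : Equiv.Perm (Fin n)) (hs₂ : Sgn s₂) (hs₁ : Sgn s₁)
    (h₃ : Sgn (fun i => s₂ (π₁ i) * s₁ i)) :
    mkIso s₂ π₂ hs₂ * mkIso s₁ π₁ hs₁ = mkIso (fun i => s₂ (π₁ i) * s₁ i) (π₂ * π₁) h₃ := by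
  refine AddEquiv.ext fun x => Subtype.ext <| funext fun j => ?_
  show spFun s₂ π₂ (spFun s₁ π₁ x.1) j = spFun (fun i => s₂ (π₁ i) * s₁ i) (π₂ * π₁) x.1 j
  have hsymm : (π₂ * π₁).symm j = π₁.symm (π₂.symm j) := rfl
  simp only [spFun, hsymm, Equiv.apply_symm_apply]
  ring

lemma mkIso_congr {s s' : Fin n → ℤ} {π π' : Equiv.Perm (Fin n)} (hs : Sgn s) (hs' : Sgn s')
    (h1 : s = s') (h2 : π = π') : mkIso s π hs = mkIso s' π' hs' := by
  subst h1; subst h2; rfl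

lemma mkIso_one (h : Sgn (fun _ : Fin n => 1)) : mkIso (fun _ => 1) 1 h = 1 := by
  refine AddEquiv.ext fun x => Subtype.ext <| funext fun j => ?_
  show (1 : ℤ) * x.1 j = x.1 j
  ring

lemma mkIso_inv (s : Fin n → ℤ) (π : Equiv.Perm (Fin n)) (hs : Sgn s)
    (hs' : Sgn (fun m => s (π.symm m))) :
    (mkIso s π hs)⁻¹ = mkIso (fun m => s (π.symm m)) π.symm hs' := by
  refine AddEquiv.ext fun x => Subtype.ext <| funext fun j => rfl

/-- `2eᵢ` as an element of `Dₙ` -/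
def stdv (i : Fin n) : ↥(DnS n) :=
  ⟨fun m => if m = i then 2 else 0, by
    rw [mem_DnS]
    rw [Finset.sum_ite_eq' Finset.univ i (fun _ => (2:ℤ))]
    simp⟩

lemma stdv_coe (i m : Fin n) : (stdv i).1 m = if m = i then 2 else 0 := rfl

lemma eq_one_data {s : Fin n → ℤ} {π : Equiv.Perm (Fin n)} {hs : Sgn s}
    (h : mkIso s π hs = 1) (i : Fin n) : π i = i ∧ s i = 1 := by
  have hx := congrArg (fun g : AddAut ↥(DnS n) => (g (stdv i)).1 (π i)) h
  change _ = (stdv i).1 (π i) at hx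
  rw [mkIso_apply_coe] at hx
  rw [Equiv.symm_apply_apply] at hx
  rw [stdv_coe, stdv_coe, if_pos rfl] at hx
  by_cases hpi : π i = i
  · refine ⟨hpi, ?_⟩
    rw [if_pos hpi] at hx
    rcases hs i with h1 | h1 <;> omega
  · rw [if_neg hpi] at hx
    rcases hs i with h1 | h1 <;> omega

/-- norm-4 vectors with all coordinate differences even are `±2eₚ`. -/
lemma norm4 (hn : 5 ≤ n) (v : Fin n → ℤ) (h4 : ∑ m, v m * v m = 4)
    (hpar : ∀ a b : Fin n, (2:ℤ) ∣ v a - v b) :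
    ∃ (p : Fin n) (s : ℤ), (s = 1 ∨ s = -1) ∧ v = fun m => if m = p then 2*s else 0 := by
  have hn0 : 0 < n := by omega
  set i0 : Fin n := ⟨0, hn0⟩
  by_cases h2 : (2:ℤ) ∣ v i0
  · have heven : ∀ m, (2:ℤ) ∣ v m := by
      intro m
      have := hpar m i0
      omega
    set w : Fin n → ℤ := fun m => v m / 2 with hw
    have hvw : ∀ m, v m = 2 * w m := fun m => (Int.mul_ediv_cancel' (heven m)).symm
    have hsum1 : ∑ m, w m * w m = 1 := by
      have h4' : ∑ m, (2 * w m) * (2 * w m) = 4 := by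
        rw [Finset.sum_congr rfl fun m _ => by rw [← hvw m]]; exact h4
      have hh : (4:ℤ) * ∑ m, w m * w m = ∑ m, (2 * w m) * (2 * w m) := by
        rw [Finset.mul_sum]
        exact Finset.sum_congr rfl fun m _ => by ring
      omega
    have hex : ∃ p, w p ≠ 0 := by
      by_contra hc
      push_neg at hc
      rw [Finset.sum_congr rfl fun m _ => by rw [hc m]] at hsum1
      simp at hsum1
    obtain ⟨p, hp⟩ := hex
    have hsplit : w p * w p + ∑ m ∈ Finset.univ.erase p, w m * w m = 1 := by
      rw [Finset.add_sum_erase Finset.univ (fun m => w m * w m) (Finset.mem_univ p)]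
      exact hsum1
    have hp1 : 1 ≤ w p * w p := by
      have h1 : 1 ≤ |w p| := Int.one_le_abs hp
      nlinarith [abs_nonneg (w p), abs_mul_abs_self (w p)]
    have hrest : ∑ m ∈ Finset.univ.erase p, w m * w m = 0 := by
      have hnn : 0 ≤ ∑ m ∈ Finset.univ.erase p, w m * w m :=
        Finset.sum_nonneg fun m _ => mul_self_nonneg (w m)
      omega
    have hzero : ∀ m, m ≠ p → w m = 0 := by
      intro m hm
      have := (Finset.sum_eq_zero_iff_of_nonneg
        (fun m _ => mul_self_nonneg (w m))).1 hrest m (by simp [hm])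
      exact mul_self_eq_zero.1 this
    have hps : w p = 1 ∨ w p = -1 := by
      have : w p * w p = 1 := by omega
      exact mul_self_eq_one_iff.1 this
    refine ⟨p, w p, hps, funext fun m => ?_⟩
    by_cases hm : m = p
    · subst hm; rw [if_pos rfl]; exact hvw m
    · rw [if_neg hm, hvw m, hzero m hm]; ring
  · exfalso
    have hodd : ∀ m, ¬ (2:ℤ) ∣ v m := by
      intro m hm
      have := hpar m i0
      omega
    have hge : ∀ m : Fin n, 1 ≤ v m * v m := by
      intro m
      have h0 : v m ≠ 0 := by
        intro h; exact hodd m (by rw [h]; exact dvd_zero 2)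
      nlinarith [Int.one_le_abs h0, abs_nonneg (v m), abs_mul_abs_self (v m)]
    have : (n : ℤ) ≤ ∑ m, v m * v m := by
      calc (n : ℤ) = ∑ _m : Fin n, (1:ℤ) := by simp
        _ ≤ ∑ m, v m * v m := Finset.sum_le_sum fun m _ => hge m
    rw [h4] at this
    omega
lemma dot_stdv (x : ↥(DnS n)) (i : Fin n) : rootF (DnS n) x (stdv i) = 2 * x.1 i := by
  rw [rootF_def]
  have h : ∀ m : Fin n, x.1 m * (stdv i).1 m = if m = i then 2 * x.1 i else 0 := by
    intro m; rw [stdv_coe]; by_cases hm : m = i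
    · subst hm; simp [mul_comm]
    · simp [hm]
  rw [Finset.sum_congr rfl fun m _ => h m,
    Finset.sum_ite_eq' Finset.univ i (fun _ => 2 * x.1 i)]
  simp

lemma dot_stdv_left (x : ↥(DnS n)) (i : Fin n) : rootF (DnS n) (stdv i) x = 2 * x.1 i := by
  rw [rootF_def]
  have h : ∀ m : Fin n, (stdv i).1 m * x.1 m = if m = i then 2 * x.1 i else 0 := by
    intro m; rw [stdv_coe]; by_cases hm : m = i
    · subst hm; simp
    · simp [hm]
  rw [Finset.sum_congr rfl fun m _ => h m,
    Finset.sum_ite_eq' Finset.univ i (fun _ => 2 * x.1 i)]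
  simp

/-- `eₐ − e_b` as an element of `Dₙ` -/
def duv (a b : Fin n) : ↥(DnS n) :=
  ⟨fun m => (if m = a then 1 else 0) - (if m = b then 1 else 0), by
    rw [mem_DnS, Finset.sum_sub_distrib,
      Finset.sum_ite_eq' Finset.univ a (fun _ => (1:ℤ)),
      Finset.sum_ite_eq' Finset.univ b (fun _ => (1:ℤ))]
    simp⟩

lemma dot_duv (x : ↥(DnS n)) (a b : Fin n) :
    rootF (DnS n) x (duv a b) = x.1 a - x.1 b := by
  rw [rootF_def]
  have h : ∀ m : Fin n, x.1 m * (duv a b).1 m =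
      (if m = a then x.1 a else 0) - (if m = b then x.1 b else 0) := by
    intro m
    show x.1 m * ((if m = a then 1 else 0) - (if m = b then 1 else 0)) = _
    have e1 : ∀ c : Fin n, x.1 m * (if m = c then (1:ℤ) else 0) = (if m = c then x.1 c else 0) := by
      intro c; split
      · rename_i h; rw [h]; ring
      · ring
    rw [mul_sub, e1 a, e1 b]
  rw [Finset.sum_congr rfl fun m _ => h m, Finset.sum_sub_distrib,
    Finset.sum_ite_eq' Finset.univ a (fun _ => x.1 a),
    Finset.sum_ite_eq' Finset.univ b (fun _ => x.1 b)]
  simp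

theorem classify (hn : 5 ≤ n) (f : AddAut ↥(DnS n))
    (hf : ∀ x y, rootF (DnS n) (f x) (f y) = rootF (DnS n) x y) :
    ∃ (s : Fin n → ℤ) (π : Equiv.Perm (Fin n)) (hs : Sgn s), f = mkIso s π hs := by
  have heven : ∀ (i : Fin n) (y : ↥(DnS n)), (2:ℤ) ∣ rootF (DnS n) (f (stdv i)) y := by
    intro i y
    have h1 := hf (stdv i) (f.symm y)
    rw [AddEquiv.apply_symm_apply, h1, dot_stdv_left] at *
    exact ⟨(f.symm y).1 i, h1⟩
  have key : ∀ i : Fin n, ∃ (q : Fin n) (t : ℤ), (t = 1 ∨ t = -1) ∧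
      ((f (stdv i)).1 = fun m => if m = q then 2*t else 0) := by
    intro i
    apply norm4 hn
    · have h := hf (stdv i) (stdv i)
      rw [dot_stdv, stdv_coe, if_pos rfl] at h
      rw [rootF_def] at h
      omega
    · intro a b
      have h := heven i (duv a b)
      rw [dot_duv] at h
      exact h
  choose p s hps hv using key
  have hpinj : Function.Injective p := by
    intro a b hab
    by_contra hne
    have h0 : rootF (DnS n) (f (stdv a)) (f (stdv b)) = 0 := by
      rw [hf, dot_stdv, stdv_coe, if_neg (fun h => hne h.symm)]
      ring
    have hva := hv a
    rw [hab] at hva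
    have h1 : rootF (DnS n) (f (stdv a)) (f (stdv b)) = 4 * (s a * s b) := by
      rw [rootF_def,
        Finset.sum_congr rfl fun m _ => by rw [congrFun hva m, congrFun (hv b) m]]
      have h2 : ∀ m : Fin n, (if m = p b then 2 * s a else 0) * (if m = p b then 2 * s b else 0)
          = if m = p b then 4 * (s a * s b) else 0 := by
        intro m; split <;> ring
      rw [Finset.sum_congr rfl fun m _ => h2 m,
        Finset.sum_ite_eq' Finset.univ (p b) (fun _ => 4 * (s a * s b))]
      simp
    rw [h0] at h1
    rcases hps a with h | h <;> rcases hps b with h' | h' <;> rw [h, h'] at h1 <;> omega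
  have hbij : Function.Bijective p := Finite.injective_iff_bijective.mp hpinj
  set π : Equiv.Perm (Fin n) := Equiv.ofBijective p hbij with hπ
  have hppi : ∀ i, π i = p i := fun i => rfl
  refine ⟨s, π, hps, AddEquiv.ext fun x => Subtype.ext <| funext fun j => ?_⟩
  set i := π.symm j with hi
  have hji : p i = j := π.apply_symm_apply j
  have hd := hf x (stdv i)
  rw [dot_stdv] at hd
  rw [rootF_def,
    Finset.sum_congr rfl fun m _ => by rw [congrFun (hv i) m]] at hd
  have hsum : ∑ m, (f x).1 m * (if m = p i then 2 * s i else 0) = (f x).1 (p i) * (2 * s i) := by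
    have h2 : ∀ m : Fin n, (f x).1 m * (if m = p i then 2 * s i else 0)
        = if m = p i then (f x).1 (p i) * (2 * s i) else 0 := by
      intro m; split
      · rename_i hm; rw [hm]
      · ring
    rw [Finset.sum_congr rfl fun m _ => h2 m,
      Finset.sum_ite_eq' Finset.univ (p i) (fun _ => (f x).1 (p i) * (2 * s i))]
    simp
  rw [hsum, hji] at hd
  show (f x).1 j = s i * x.1 i
  rcases hps i with h1 | h1 <;> rw [h1] at hd ⊢ <;> linarith
lemma sgn_one : Sgn (fun _ : Fin n => (1:ℤ)) := fun _ => Or.inl rfl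

lemma Sgn.comp {s : Fin n → ℤ} (hs : Sgn s) (g : Fin n → Fin n) :
    Sgn (fun i => s (g i)) := fun i => hs (g i)

lemma Sgn.mul {u v : Fin n → ℤ} (hu : Sgn u) (hv : Sgn v) :
    Sgn (fun i => u i * v i) := fun i => by
  dsimp only
  rcases hu i with h | h <;> rcases hv i with h' | h' <;> rw [h, h'] <;> norm_num

lemma sgn_ite (a b : Fin n) (t : ℤ) (ht : t = 1 ∨ t = -1) :
    Sgn (fun m => if m = a ∨ m = b then t else 1) := fun m => by
  dsimp only; split
  · exact ht
  · exact Or.inl rfl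

/-- The order-3 signed permutation data. -/
def Valid (s : Fin n → ℤ) (π : Equiv.Perm (Fin n)) : Prop :=
  ∀ i, π (π (π i)) = i ∧ s (π (π i)) * s (π i) * s i = 1

lemma cube_data {s : Fin n → ℤ} {π : Equiv.Perm (Fin n)} {hs : Sgn s}
    (h : mkIso s π hs * mkIso s π hs * mkIso s π hs = 1) : Valid s π := by
  rw [mkIso_mul s s π π hs hs ((hs.comp π).mul hs)] at h
  rw [mkIso_mul _ s (π * π) π ((hs.comp π).mul hs) hs
    ((((hs.comp π).mul hs).comp π).mul hs)] at h
  intro i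
  obtain ⟨h1, h2⟩ := eq_one_data h i
  refine ⟨?_, ?_⟩
  · simpa [Equiv.Perm.mul_apply] using h1
  · simpa [Equiv.Perm.mul_apply, mul_assoc] using h2

lemma valid_fixed_sign {s : Fin n → ℤ} {π : Equiv.Perm (Fin n)} (hs : Sgn s)
    (hv : Valid s π) {i : Fin n} (hi : π i = i) : s i = 1 := by
  have h2 := (hv i).2
  rw [hi, hi] at h2
  rcases hs i with h | h <;> rw [h] at h2 <;> omega

/-- signed transposition reflections are in the Weyl group -/
lemma refl_mem_weyl (a b : Fin n) (hab : a ≠ b) (t : ℤ) (ht : t = 1 ∨ t = -1) :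
    mkIso (fun m => if m = a ∨ m = b then t else 1) (Equiv.swap a b) (sgn_ite a b t ht)
      ∈ WeylGrp (rootF (DnS n)) := by
  have hmem : (fun m => (if m = a then (1:ℤ) else 0) - (if m = b then t else 0)) ∈ DnS n := by
    rw [mem_DnS, Finset.sum_sub_distrib,
      Finset.sum_ite_eq' Finset.univ a (fun _ => (1:ℤ)),
      Finset.sum_ite_eq' Finset.univ b (fun _ => t)]
    rcases ht with h | h <;> rw [h] <;> simp
  apply Subgroup.subset_closure
  refine ⟨⟨fun m => (if m = a then 1 else 0) - (if m = b then t else 0), hmem⟩, ?_, ?_⟩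
  · rw [rootF_def]
    have hpt : ∀ m : Fin n,
        ((if m = a then (1:ℤ) else 0) - (if m = b then t else 0)) *
        ((if m = a then (1:ℤ) else 0) - (if m = b then t else 0)) =
        (if m = a then 1 else 0) + (if m = b then 1 else 0) := by
      intro m
      have hba : ¬ b = a := fun h => hab h.symm
      rcases ht with h | h <;> subst h <;>
        by_cases hma : m = a <;> by_cases hmb : m = b <;>
        [exact ((hab (hma.symm.trans hmb)).elim);
         (simp [hma, hmb, hab, hba]; try ring);
         (simp [hma, hmb, hab, hba]; try ring);
         (simp [hma, hmb, hab, hba]; try ring);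
         exact ((hab (hma.symm.trans hmb)).elim);
         (simp [hma, hmb, hab, hba]; try ring);
         (simp [hma, hmb, hab, hba]; try ring);
         (simp [hma, hmb, hab, hba]; try ring)]
    rw [Finset.sum_congr rfl fun m _ => hpt m, Finset.sum_add_distrib,
      Finset.sum_ite_eq' Finset.univ a (fun _ => (1:ℤ)),
      Finset.sum_ite_eq' Finset.univ b (fun _ => (1:ℤ))]
    simp
  · intro x
    apply Subtype.ext
    funext j
    set α : ↥(DnS n) := ⟨fun m => (if m = a then (1:ℤ) else 0) - (if m = b then t else 0), hmem⟩
      with hα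
    have hBx : rootF (DnS n) x α = x.1 a - t * x.1 b := by
      rw [rootF_def]
      have hpt : ∀ m : Fin n, x.1 m * α.1 m =
          (if m = a then x.1 a else 0) - (if m = b then t * x.1 b else 0) := by
        intro m
        show x.1 m * ((if m = a then (1:ℤ) else 0) - (if m = b then t else 0)) = _
        have hba : ¬ b = a := fun h => hab h.symm
        by_cases hma : m = a <;> by_cases hmb : m = b
        · exact (hab (hma.symm.trans hmb)).elim
        · simp [hma, hmb, hab, hba]
        · simp [hma, hmb, hab, hba]; ring
        · simp [hma, hmb, hab, hba]
      rw [Finset.sum_congr rfl fun m _ => hpt m, Finset.sum_sub_distrib,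
        Finset.sum_ite_eq' Finset.univ a (fun _ => x.1 a),
        Finset.sum_ite_eq' Finset.univ b (fun _ => t * x.1 b)]
      simp
    have hcoe : ((x - rootF (DnS n) x α • α : ↥(DnS n)) : Fin n → ℤ) j
        = x.1 j - rootF (DnS n) x α * α.1 j := by
      rw [AddSubgroup.coe_sub]
      simp [zsmul_eq_mul]
    rw [hcoe, hBx]
    show (if Equiv.swap a b j = a ∨ Equiv.swap a b j = b then t else 1) *
        x.1 (Equiv.swap a b j) =
      x.1 j - (x.1 a - t * x.1 b) * ((if j = a then 1 else 0) - (if j = b then t else 0))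
    by_cases hja : j = a <;> by_cases hjb : j = b
    · exact (hab (hja.symm.trans hjb)).elim
    · have hsw : Equiv.swap a b j = b := by rw [hja]; exact Equiv.swap_apply_left a b
      rw [hsw, if_pos (Or.inr rfl), if_pos hja, if_neg hjb, hja]
      ring
    · have hsw : Equiv.swap a b j = a := by rw [hjb]; exact Equiv.swap_apply_right a b
      rw [hsw, if_pos (Or.inl rfl), if_neg hja, if_pos hjb, hjb]
      rcases ht with h | h <;> rw [h] <;> ring
    · have hsw : Equiv.swap a b j = j := Equiv.swap_apply_of_ne_of_ne hja hjb
      rw [hsw, if_neg (by tauto), if_neg hja, if_neg hjb]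
      ring

lemma perm_mem_weyl (σ : Equiv.Perm (Fin n)) :
    mkIso (fun _ => 1) σ sgn_one ∈ WeylGrp (rootF (DnS n)) := by
  refine Equiv.Perm.swap_induction_on σ ?_ ?_
  · rw [mkIso_one]
    exact one_mem _
  · intro f a b hab ih
    have h1 : mkIso (fun _ => 1) (Equiv.swap a b) sgn_one ∈ WeylGrp (rootF (DnS n)) := by
      have h := refl_mem_weyl a b hab 1 (Or.inl rfl)
      rwa [mkIso_congr _ sgn_one (funext fun m => by split <;> rfl) rfl] at h
    have h2 := mkIso_mul (fun _ => (1:ℤ)) (fun _ => (1:ℤ)) (Equiv.swap a b) f sgn_one sgn_one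
      (fun i => by norm_num)
    have hgoal : mkIso (fun _ => (1:ℤ)) (Equiv.swap a b * f) sgn_one =
        mkIso (fun i => (1:ℤ) * 1) (Equiv.swap a b * f) (fun i => by norm_num) :=
      mkIso_congr sgn_one (fun i => by norm_num) (funext fun i => (one_mul 1).symm) rfl
    rw [hgoal, ← h2]
    exact mul_mem h1 ih

lemma pairflip_mem_weyl (a b : Fin n) (hab : a ≠ b) :
    mkIso (fun m => if m = a ∨ m = b then (-1:ℤ) else 1) 1
      (sgn_ite a b (-1) (Or.inr rfl)) ∈ WeylGrp (rootF (DnS n)) := by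
  have h1 := refl_mem_weyl a b hab 1 (Or.inl rfl)
  have h2 := refl_mem_weyl a b hab (-1) (Or.inr rfl)
  have h3 := mkIso_mul (fun m => if m = a ∨ m = b then (1:ℤ) else 1)
    (fun m => if m = a ∨ m = b then (-1:ℤ) else 1) (Equiv.swap a b) (Equiv.swap a b)
    (sgn_ite a b 1 (Or.inl rfl)) (sgn_ite a b (-1) (Or.inr rfl))
    (((sgn_ite a b 1 (Or.inl rfl)).comp _).mul (sgn_ite a b (-1) (Or.inr rfl)))
  have hperm : Equiv.swap a b * Equiv.swap a b = (1 : Equiv.Perm (Fin n)) :=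
    Equiv.swap_mul_self a b
  have hsgn : (fun i => (if Equiv.swap a b i = a ∨ Equiv.swap a b i = b then (1:ℤ) else 1) *
      (if i = a ∨ i = b then (-1:ℤ) else 1)) =
      (fun m => if m = a ∨ m = b then (-1:ℤ) else 1) := by
    funext i
    have h : (if Equiv.swap a b i = a ∨ Equiv.swap a b i = b then (1:ℤ) else 1) = 1 := by
      split <;> rfl
    rw [h, one_mul]
  rw [mkIso_congr _ (sgn_ite a b (-1) (Or.inr rfl)) hsgn hperm] at h3
  rw [← h3]
  exact mul_mem h1 h2
/-- the sign data of a signed 3-cycle supported on `{i,j,k}` -/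
def cycSgn (i j k : Fin n) (s1 s2 : ℤ) : Fin n → ℤ :=
  fun m => if m = i then s1 else if m = j then s2 else if m = k then s1 * s2 else 1

lemma cycSgn_sgn {i j k : Fin n} {s1 s2 : ℤ} (h1 : s1 = 1 ∨ s1 = -1)
    (h2 : s2 = 1 ∨ s2 = -1) : Sgn (cycSgn i j k s1 s2) := by
  intro m
  simp only [cycSgn]
  split
  · exact h1
  · split
    · exact h2
    · split
      · rcases h1 with h | h <;> rcases h2 with h' | h' <;> rw [h, h'] <;> norm_num
      · exact Or.inl rfl

lemma cycle3_mem_weyl {i j k : Fin n} {s1 s2 : ℤ} (hij : i ≠ j) (hjk : j ≠ k) (hik : i ≠ k)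
    (h1 : s1 = 1 ∨ s1 = -1) (h2 : s2 = 1 ∨ s2 = -1) :
    mkIso (cycSgn i j k s1 s2) (Equiv.swap i j * Equiv.swap j k)
      (cycSgn_sgn h1 h2) ∈ WeylGrp (rootF (DnS n)) := by
  have hr1 := refl_mem_weyl i j hij s1 h1
  have hr2 := refl_mem_weyl j k hjk s2 h2
  have h3 := mkIso_mul (fun m => if m = i ∨ m = j then s1 else 1)
    (fun m => if m = j ∨ m = k then s2 else 1) (Equiv.swap i j) (Equiv.swap j k)
    (sgn_ite i j s1 h1) (sgn_ite j k s2 h2)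
    (((sgn_ite i j s1 h1).comp _).mul (sgn_ite j k s2 h2))
  have hji : ¬ j = i := fun h => hij h.symm
  have hkj : ¬ k = j := fun h => hjk h.symm
  have hki : ¬ k = i := fun h => hik h.symm
  have hsgn : (fun m => (if Equiv.swap j k m = i ∨ Equiv.swap j k m = j then s1 else 1) *
      (if m = j ∨ m = k then s2 else 1)) = cycSgn i j k s1 s2 := by
    funext m
    unfold cycSgn
    by_cases hmi : m = i
    · have hsw : Equiv.swap j k m = m :=
        Equiv.swap_apply_of_ne_of_ne (by rw [hmi]; exact hij) (by rw [hmi]; exact hik)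
      rw [hsw]
      simp [hmi, hij, hik, hji, hkj, hki]
    · by_cases hmj : m = j
      · have hsw : Equiv.swap j k m = k := by rw [hmj]; exact Equiv.swap_apply_left j k
        rw [hsw]
        simp [hmj, hji, hkj, hki, hij, hjk, hik]
      · by_cases hmk : m = k
        · have hsw : Equiv.swap j k m = j := by rw [hmk]; exact Equiv.swap_apply_right j k
          rw [hsw]
          simp [hmk, hji, hkj, hki, hij, hjk, hik]
        · have hsw : Equiv.swap j k m = m := Equiv.swap_apply_of_ne_of_ne hmj hmk
          rw [hsw]
          simp [hmi, hmj, hmk]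
  have hgoal : mkIso (cycSgn i j k s1 s2) (Equiv.swap i j * Equiv.swap j k)
      (cycSgn_sgn h1 h2) =
      mkIso (fun m => (if Equiv.swap j k m = i ∨ Equiv.swap j k m = j then s1 else 1) *
        (if m = j ∨ m = k then s2 else 1)) (Equiv.swap i j * Equiv.swap j k)
        (((sgn_ite i j s1 h1).comp _).mul (sgn_ite j k s2 h2)) :=
    mkIso_congr _ _ hsgn.symm rfl
  rw [hgoal, ← h3]
  exact mul_mem hr1 hr2

lemma valid_mem_weyl_aux : ∀ (N : ℕ) (s : Fin n → ℤ) (π : Equiv.Perm (Fin n)) (hs : Sgn s),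
    Valid s π → π.support.card ≤ N → mkIso s π hs ∈ WeylGrp (rootF (DnS n)) := by
  intro N
  induction N with
  | zero =>
      intro s π hs hval hcard
      have hsup : π.support = ∅ := Finset.card_eq_zero.1 (Nat.le_zero.1 hcard)
      have hπ1 : π = 1 := Equiv.Perm.support_eq_empty_iff.1 hsup
      have hs1 : s = fun _ => 1 := funext fun m =>
        valid_fixed_sign hs hval (by rw [hπ1]; rfl)
      rw [mkIso_congr hs sgn_one hs1 hπ1, mkIso_one]
      exact one_mem _
  | succ N ih =>
      intro s π hs hval hcard
      rcases Finset.eq_empty_or_nonempty π.support with hsup | ⟨i, hi⟩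
      · have hπ1 : π = 1 := Equiv.Perm.support_eq_empty_iff.1 hsup
        have hs1 : s = fun _ => 1 := funext fun m =>
          valid_fixed_sign hs hval (by rw [hπ1]; rfl)
        rw [mkIso_congr hs sgn_one hs1 hπ1, mkIso_one]
        exact one_mem _
      · have hii : π i ≠ i := Equiv.Perm.mem_support.1 hi
        set j := π i with hj
        set k := π j with hk
        have hπ3 : ∀ m, π (π (π m)) = m := fun m => (hval m).1
        have hπk : π k = i := by rw [hk, hj]; exact hπ3 i
        have hij : i ≠ j := fun h => hii (hj.symm.trans h.symm)
        have hjk : j ≠ k := by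
          intro h
          have h1 : π j = j := by rw [← h] at hk; exact hk.symm
          exact hij (π.injective (hj.symm.trans h1.symm))
        have hik : i ≠ k := by
          intro h
          have h1 : π (π j) = π j := by rw [← hk, hπk, h, hk]
          have h2 : π j = j := π.injective h1
          exact hij (π.injective (hj.symm.trans h2.symm))
        have hji : j ≠ i := fun h => hij h.symm
        have hkj : k ≠ j := fun h => hjk h.symm
        have hki : k ≠ i := fun h => hik h.symm
        set c3 := Equiv.swap i j * Equiv.swap j k with hc3def
        have hc3i : c3 i = j := by
          show Equiv.swap i j (Equiv.swap j k i) = j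
          rw [Equiv.swap_apply_of_ne_of_ne hij hik, Equiv.swap_apply_left]
        have hc3j : c3 j = k := by
          show Equiv.swap i j (Equiv.swap j k j) = k
          rw [Equiv.swap_apply_left, Equiv.swap_apply_of_ne_of_ne hki hkj]
        have hc3k : c3 k = i := by
          show Equiv.swap i j (Equiv.swap j k k) = i
          rw [Equiv.swap_apply_right, Equiv.swap_apply_right]
        have hc3o : ∀ m, m ≠ i → m ≠ j → m ≠ k → c3 m = m := by
          intro m h1 h2 h3
          show Equiv.swap i j (Equiv.swap j k m) = m
          rw [Equiv.swap_apply_of_ne_of_ne h2 h3, Equiv.swap_apply_of_ne_of_ne h1 h2]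
        have hsymi : c3.symm i = k := by rw [Equiv.symm_apply_eq]; exact hc3k.symm
        have hsymj : c3.symm j = i := by rw [Equiv.symm_apply_eq]; exact hc3i.symm
        have hsymk : c3.symm k = j := by rw [Equiv.symm_apply_eq]; exact hc3j.symm
        have hsymo : ∀ m, m ≠ i → m ≠ j → m ≠ k → c3.symm m = m := by
          intro m h1 h2 h3
          rw [Equiv.symm_apply_eq]
          exact (hc3o m h1 h2 h3).symm
        set π2 : Equiv.Perm (Fin n) := c3.symm * π with hπ2def
        have hout : ∀ m, m ≠ i → m ≠ j → m ≠ k → (π m ≠ i ∧ π m ≠ j ∧ π m ≠ k) := by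
          intro m h1 h2 h3
          refine ⟨?_, ?_, ?_⟩
          · intro h; exact h3 (π.injective (h.trans hπk.symm))
          · intro h; exact h1 (π.injective (h.trans hj))
          · intro h; exact h2 (π.injective (h.trans hk))
        have hsfi : cycSgn i j k (s i) (s j) i = s i := if_pos rfl
        have hsfj : cycSgn i j k (s i) (s j) j = s j := by
          unfold cycSgn; rw [if_neg hji, if_pos rfl]
        have hsfk : cycSgn i j k (s i) (s j) k = s i * s j := by
          unfold cycSgn; rw [if_neg hki, if_neg hkj, if_pos rfl]
        have hsfo : ∀ m, m ≠ i → m ≠ j → m ≠ k → cycSgn i j k (s i) (s j) m = 1 := by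
          intro m h1 h2 h3
          unfold cycSgn; rw [if_neg h1, if_neg h2, if_neg h3]
        set S2 : Fin n → ℤ := fun m => cycSgn i j k (s i) (s j) (c3.symm (π m)) * s m
          with hS2def
        have hS2sgn : Sgn S2 :=
          ((cycSgn_sgn (hs i) (hs j)).comp (fun m => c3.symm (π m))).mul hs
        have hS2i : S2 i = 1 := by
          show cycSgn i j k (s i) (s j) (c3.symm (π i)) * s i = 1
          rw [← hj, hsymj, hsfi]; exact hs.sq i
        have hS2j : S2 j = 1 := by
          show cycSgn i j k (s i) (s j) (c3.symm (π j)) * s j = 1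
          rw [← hk, hsymk, hsfj]; exact hs.sq j
        have hS2k : S2 k = 1 := by
          show cycSgn i j k (s i) (s j) (c3.symm (π k)) * s k = 1
          rw [hπk, hsymi, hsfk]
          have hv := (hval i).2
          rw [← hj, ← hk] at hv
          linear_combination hv
        have hS2o : ∀ m, m ≠ i → m ≠ j → m ≠ k → S2 m = s m := by
          intro m h1 h2 h3
          obtain ⟨o1, o2, o3⟩ := hout m h1 h2 h3
          show cycSgn i j k (s i) (s j) (c3.symm (π m)) * s m = s m
          rw [hsymo (π m) o1 o2 o3, hsfo (π m) o1 o2 o3, one_mul]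
        have hPi : π2 i = i := by
          show c3.symm (π i) = i
          rw [← hj, hsymj]
        have hPj : π2 j = j := by
          show c3.symm (π j) = j
          rw [← hk, hsymk]
        have hPk : π2 k = k := by
          show c3.symm (π k) = k
          rw [hπk, hsymi]
        have hPo : ∀ m, m ≠ i → m ≠ j → m ≠ k → π2 m = π m := by
          intro m h1 h2 h3
          obtain ⟨o1, o2, o3⟩ := hout m h1 h2 h3
          show c3.symm (π m) = π m
          exact hsymo (π m) o1 o2 o3
        have hval2 : Valid S2 π2 := by
          intro m
          by_cases h1 : m = i
          · subst h1
            rw [hPi, hPi, hS2i]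
            exact ⟨hPi, by norm_num⟩
          · by_cases h2 : m = j
            · subst h2
              rw [hPj, hPj, hS2j]
              exact ⟨hPj, by norm_num⟩
            · by_cases h3 : m = k
              · subst h3
                rw [hPk, hPk, hS2k]
                exact ⟨hPk, by norm_num⟩
              · obtain ⟨o1, o2, o3⟩ := hout m h1 h2 h3
                obtain ⟨p1, p2, p3⟩ := hout (π m) o1 o2 o3
                have e1 : π2 m = π m := hPo m h1 h2 h3
                have e2 : π2 (π m) = π (π m) := hPo (π m) o1 o2 o3
                have e3 : π2 (π (π m)) = π (π (π m)) := hPo _ p1 p2 p3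
                constructor
                · rw [e1, e2, e3, hπ3]
                · rw [e1, e2, hS2o _ p1 p2 p3, hS2o _ o1 o2 o3, hS2o _ h1 h2 h3]
                  exact (hval m).2
        have hsub : π2.support ⊆ π.support := by
          intro m hm
          rw [Equiv.Perm.mem_support] at hm ⊢
          intro hfix
          apply hm
          by_cases h1 : m = i
          · exact absurd hfix (by rw [h1]; exact hii)
          · by_cases h2 : m = j
            · exfalso
              apply hjk
              rw [h2] at hfix
              rw [hk, hfix]
            · by_cases h3 : m = k
              · exfalso
                apply hik
                rw [h3] at hfix
                rw [← hπk, hfix]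
              · rw [hPo m h1 h2 h3, hfix]
        have hlt : π2.support.card < π.support.card := by
          apply Finset.card_lt_card
          refine ⟨hsub, fun hall => ?_⟩
          have := hall hi
          rw [Equiv.Perm.mem_support] at this
          exact this hPi
        have hmem2 : mkIso S2 π2 hS2sgn ∈ WeylGrp (rootF (DnS n)) :=
          ih S2 π2 hS2sgn hval2 (by omega)
        have hcyc := cycle3_mem_weyl hij hjk hik (hs i) (hs j)
        have hE : (mkIso (cycSgn i j k (s i) (s j)) c3 (cycSgn_sgn (hs i) (hs j)))⁻¹ *
            mkIso s π hs = mkIso S2 π2 hS2sgn := by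
          rw [mkIso_inv (cycSgn i j k (s i) (s j)) c3 (cycSgn_sgn (hs i) (hs j))
            ((cycSgn_sgn (hs i) (hs j)).comp _)]
          exact mkIso_mul _ s c3.symm π ((cycSgn_sgn (hs i) (hs j)).comp _) hs hS2sgn
        have hid : mkIso s π hs =
            mkIso (cycSgn i j k (s i) (s j)) c3 (cycSgn_sgn (hs i) (hs j)) *
            ((mkIso (cycSgn i j k (s i) (s j)) c3 (cycSgn_sgn (hs i) (hs j)))⁻¹ *
              mkIso s π hs) := by
          rw [← mul_assoc, mul_inv_cancel, one_mul]
        rw [hid, hE]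
        exact mul_mem hcyc hmem2

lemma valid_mem_weyl {s : Fin n → ℤ} {π : Equiv.Perm (Fin n)} (hs : Sgn s)
    (hval : Valid s π) : mkIso s π hs ∈ WeylGrp (rootF (DnS n)) :=
  valid_mem_weyl_aux π.support.card s π hs hval le_rfl
def pcf (c : ℕ) (j : ℕ) : ℕ := if j < 3*c then 3*(j/3) + (j%3+1)%3 else j
def pcg (c : ℕ) (j : ℕ) : ℕ := if j < 3*c then 3*(j/3) + (j%3+2)%3 else j

lemma pcf_of_lt {c j : ℕ} (h : j < 3*c) : pcf c j = 3*(j/3) + (j%3+1)%3 := if_pos h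
lemma pcf_of_ge {c j : ℕ} (h : ¬ j < 3*c) : pcf c j = j := if_neg h
lemma pcg_of_lt {c j : ℕ} (h : j < 3*c) : pcg c j = 3*(j/3) + (j%3+2)%3 := if_pos h
lemma pcg_of_ge {c j : ℕ} (h : ¬ j < 3*c) : pcg c j = j := if_neg h

lemma pcf_lt_3c {c j : ℕ} (h : j < 3*c) : pcf c j < 3*c := by rw [pcf_of_lt h]; omega
lemma pcg_lt_3c {c j : ℕ} (h : j < 3*c) : pcg c j < 3*c := by rw [pcg_of_lt h]; omega

lemma pcf_lt {c j : ℕ} (h3c : 3*c ≤ n) (hj : j < n) : pcf c j < n := by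
  unfold pcf; split <;> omega
lemma pcg_lt {c j : ℕ} (h3c : 3*c ≤ n) (hj : j < n) : pcg c j < n := by
  unfold pcg; split <;> omega

lemma pcg_pcf (c j : ℕ) : pcg c (pcf c j) = j := by
  by_cases h : j < 3*c
  · have e1 := pcf_of_lt h
    have l1 := pcf_lt_3c h
    have e2 := pcg_of_lt l1
    omega
  · rw [pcf_of_ge h, pcg_of_ge h]

lemma pcf_pcg (c j : ℕ) : pcf c (pcg c j) = j := by
  by_cases h : j < 3*c
  · have e1 := pcg_of_lt h
    have l1 := pcg_lt_3c h
    have e2 := pcf_of_lt l1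
    omega
  · rw [pcg_of_ge h, pcf_of_ge h]

/-- the standard product of `c` 3-cycles on `Fin n` -/
def pcPerm (c : ℕ) (h3c : 3*c ≤ n) : Equiv.Perm (Fin n) where
  toFun j := ⟨pcf c j, pcf_lt h3c j.2⟩
  invFun j := ⟨pcg c j, pcg_lt h3c j.2⟩
  left_inv j := Fin.ext (pcg_pcf c j)
  right_inv j := Fin.ext (pcf_pcg c j)

lemma pcPerm_coe {c : ℕ} (h3c : 3*c ≤ n) (j : Fin n) :
    ((pcPerm c h3c j : Fin n) : ℕ) = pcf c j := rfl

lemma pcf3 (c j : ℕ) : pcf c (pcf c (pcf c j)) = j := by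
  by_cases h : j < 3*c
  · have e1 := pcf_of_lt h
    have l1 := pcf_lt_3c h
    have e2 := pcf_of_lt l1
    have l2 := pcf_lt_3c l1
    have e3 := pcf_of_lt l2
    omega
  · rw [pcf_of_ge h, pcf_of_ge h, pcf_of_ge h]

lemma pcPerm_cube {c : ℕ} (h3c : 3*c ≤ n) (j : Fin n) :
    pcPerm c h3c (pcPerm c h3c (pcPerm c h3c j)) = j :=
  Fin.ext (pcf3 c j)

lemma pc_valid {c : ℕ} (h3c : 3*c ≤ n) : Valid (fun _ => 1) (pcPerm c h3c) :=
  fun j => ⟨pcPerm_cube h3c j, by norm_num⟩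

lemma card_filter_coe_lt {m : ℕ} (hm : m ≤ n) :
    (Finset.univ.filter (fun j : Fin n => (j:ℕ) < m)).card = m := by
  have he : Finset.univ.filter (fun j : Fin n => (j:ℕ) < m) =
      Finset.univ.map (Fin.castLEEmb hm) := by
    ext j
    rw [Finset.mem_filter, Finset.mem_map]
    constructor
    · rintro ⟨-, hj⟩
      exact ⟨⟨(j:ℕ), hj⟩, Finset.mem_univ _, Fin.ext rfl⟩
    · rintro ⟨i, -, hi⟩
      refine ⟨Finset.mem_univ _, ?_⟩
      rw [← hi]
      exact i.2
  rw [he, Finset.card_map, Finset.card_univ, Fintype.card_fin]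

lemma pc_support {c : ℕ} (h3c : 3*c ≤ n) :
    (pcPerm c h3c).support = Finset.univ.filter (fun j : Fin n => (j:ℕ) < 3*c) := by
  ext j
  rw [Equiv.Perm.mem_support, Finset.mem_filter]
  constructor
  · intro hne
    refine ⟨Finset.mem_univ _, ?_⟩
    by_contra hge
    exact hne (Fin.ext (pcf_of_ge hge))
  · rintro ⟨-, hlt⟩ heq
    have h1 : pcf c (j:ℕ) = (j:ℕ) := congrArg Fin.val heq
    rw [pcf_of_lt hlt] at h1
    omega

lemma pc_support_card {c : ℕ} (h3c : 3*c ≤ n) : (pcPerm c h3c).support.card = 3*c := by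
  rw [pc_support h3c, card_filter_coe_lt h3c]

lemma cycleType_of_valid {π : Equiv.Perm (Fin n)} (h3 : ∀ m, π (π (π m)) = m) :
    π.cycleType = Multiset.replicate (Multiset.card π.cycleType) 3 ∧
      π.support.card = 3 * Multiset.card π.cycleType := by
  have hpow : π ^ 3 = 1 := by
    ext m
    have : (π ^ 3) m = π (π (π m)) := by
      rw [pow_succ, pow_succ, pow_one]
      rfl
    rw [this, h3]
    rfl
  have hord : orderOf π ∣ 3 := orderOf_dvd_of_pow_eq_one hpow
  have hmem : ∀ l ∈ π.cycleType, l = 3 := by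
    intro l hl
    have h2 : 2 ≤ l := Equiv.Perm.two_le_of_mem_cycleType hl
    have hdvd : l ∣ 3 := by
      have := Multiset.dvd_lcm hl
      rw [Equiv.Perm.lcm_cycleType] at this
      exact this.trans hord
    rcases (Nat.prime_three).eq_one_or_self_of_dvd l hdvd with h | h <;> omega
  have hrep : π.cycleType = Multiset.replicate (Multiset.card π.cycleType) 3 :=
    Multiset.eq_replicate_card.2 hmem
  refine ⟨hrep, ?_⟩
  have hsum := Equiv.Perm.sum_cycleType π
  rw [hrep, Multiset.sum_replicate, smul_eq_mul] at hsum
  omega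
lemma mkIso_conj (t s : Fin n → ℤ) (τ π : Equiv.Perm (Fin n)) (ht : Sgn t) (hs : Sgn s)
    (h3 : Sgn (fun i => t (π (τ.symm i)) * s (τ.symm i) * t (τ.symm i))) :
    mkIso t τ ht * mkIso s π hs * (mkIso t τ ht)⁻¹ =
      mkIso (fun i => t (π (τ.symm i)) * s (τ.symm i) * t (τ.symm i)) (τ * π * τ.symm) h3 := by
  rw [mkIso_inv t τ ht (ht.comp _),
    mkIso_mul t s τ π ht hs ((ht.comp π).mul hs),
    mkIso_mul _ _ (τ*π) τ.symm ((ht.comp π).mul hs) (ht.comp _)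
      ((((ht.comp π).mul hs).comp _).mul (ht.comp _))]

lemma diag_one_mem_weyl (t2 : Fin n → ℤ) (ht2 : Sgn t2) (h : ∀ m, t2 m = 1) :
    mkIso t2 1 ht2 ∈ WeylGrp (rootF (DnS n)) := by
  rw [mkIso_congr ht2 sgn_one (funext h) rfl, mkIso_one]
  exact one_mem _

lemma diag_pair_mem_weyl (A B : Fin n) (hAB : A ≠ B) (t2 : Fin n → ℤ) (ht2 : Sgn t2)
    (hA : t2 A = -1) (hB : t2 B = -1) (hoth : ∀ m, m ≠ A → m ≠ B → t2 m = 1) :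
    mkIso t2 1 ht2 ∈ WeylGrp (rootF (DnS n)) := by
  have h1 : t2 = fun m => if m = A ∨ m = B then (-1:ℤ) else 1 := funext fun m => by
    by_cases h : m = A
    · rw [if_pos (Or.inl h), h, hA]
    · by_cases h' : m = B
      · rw [if_pos (Or.inr h'), h', hB]
      · rw [if_neg (by tauto), hoth m h h']
  rw [mkIso_congr ht2 (sgn_ite A B (-1) (Or.inr rfl)) h1 rfl]
  exact pairflip_mem_weyl A B hAB

lemma diag_blocks_mem_weyl : ∀ (c' : ℕ), 3*c' ≤ n → ∀ (t : Fin n → ℤ) (ht : Sgn t),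
    (∀ m : Fin n, ¬ (m:ℕ) < 3*c' → t m = 1) →
    (∀ a b d : Fin n, (a:ℕ) < 3*c' → (a:ℕ)%3 = 0 → (b:ℕ) = (a:ℕ)+1 → (d:ℕ) = (a:ℕ)+2 →
      t a * t b * t d = 1) →
    mkIso t 1 ht ∈ WeylGrp (rootF (DnS n)) := by
  intro c'
  induction c' with
  | zero =>
      intro h3c t ht hout hblk
      exact diag_one_mem_weyl t ht (fun m => hout m (by omega))
  | succ c ih =>
      intro h3c t ht hout hblk
      have ht1 : Sgn (fun m : Fin n => if (m:ℕ) < 3*c then t m else 1) := fun m => by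
        dsimp only
        split
        · exact ht m
        · exact Or.inl rfl
      have ht2 : Sgn (fun m : Fin n => if 3*c ≤ (m:ℕ) ∧ (m:ℕ) < 3*c+3 then t m else 1) :=
        fun m => by
          dsimp only
          split
          · exact ht m
          · exact Or.inl rfl
      have hsplit : mkIso t 1 ht =
          mkIso (fun m : Fin n => if (m:ℕ) < 3*c then t m else 1) 1 ht1 *
          mkIso (fun m : Fin n => if 3*c ≤ (m:ℕ) ∧ (m:ℕ) < 3*c+3 then t m else 1) 1 ht2 := by
        have hfun : t = fun i : Fin n =>
            (fun m : Fin n => if (m:ℕ) < 3*c then t m else 1) ((1 : Equiv.Perm (Fin n)) i) *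
            (fun m : Fin n => if 3*c ≤ (m:ℕ) ∧ (m:ℕ) < 3*c+3 then t m else 1) i := by
          funext m
          show t m = (if (m:ℕ) < 3*c then t m else 1) *
            (if 3*c ≤ (m:ℕ) ∧ (m:ℕ) < 3*c+3 then t m else 1)
          by_cases h1 : (m:ℕ) < 3*c
          · rw [if_pos h1, if_neg (by omega)]
            ring
          · by_cases h2 : 3*c ≤ (m:ℕ) ∧ (m:ℕ) < 3*c+3
            · rw [if_neg h1, if_pos h2]
              ring
            · rw [if_neg h1, if_neg h2, hout m (by omega)]
              ring
        have hc := mkIso_congr ht ((ht1.comp _).mul ht2) hfun (one_mul 1).symm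
        rw [hc]
        exact (mkIso_mul _ _ 1 1 ht1 ht2 ((ht1.comp _).mul ht2)).symm
      rw [hsplit]
      have hm1 : mkIso (fun m : Fin n => if (m:ℕ) < 3*c then t m else 1) 1 ht1
          ∈ WeylGrp (rootF (DnS n)) := by
        apply ih (by omega)
        · intro m hm
          exact if_neg hm
        · intro a b d ha ha0 hb hd
          have hb3 : (b:ℕ) < 3*c := by omega
          have hd3 : (d:ℕ) < 3*c := by omega
          show (if (a:ℕ) < 3*c then t a else 1) * (if (b:ℕ) < 3*c then t b else 1) *
            (if (d:ℕ) < 3*c then t d else 1) = 1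
          rw [if_pos ha, if_pos hb3, if_pos hd3]
          exact hblk a b d (by omega) ha0 hb hd
      refine mul_mem hm1 ?_
      set A : Fin n := ⟨3*c, by omega⟩ with hAdef
      set B : Fin n := ⟨3*c+1, by omega⟩ with hBdef
      set D : Fin n := ⟨3*c+2, by omega⟩ with hDdef
      have hAco : (A:ℕ) = 3*c := rfl
      have hBco : (B:ℕ) = 3*c+1 := rfl
      have hDco : (D:ℕ) = 3*c+2 := rfl
      have hABD : t A * t B * t D = 1 :=
        hblk A B D (by simp only [hAco]; omega) (by simp only [hAco]; omega)
          (by simp only [hAco, hBco]) (by simp only [hAco, hDco])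
      have hvalA : (if 3*c ≤ (A:ℕ) ∧ (A:ℕ) < 3*c+3 then t A else 1) = t A :=
        if_pos (by simp only [hAco]; omega)
      have hvalB : (if 3*c ≤ (B:ℕ) ∧ (B:ℕ) < 3*c+3 then t B else 1) = t B :=
        if_pos (by simp only [hBco]; omega)
      have hvalD : (if 3*c ≤ (D:ℕ) ∧ (D:ℕ) < 3*c+3 then t D else 1) = t D :=
        if_pos (by simp only [hDco]; omega)
      have hvaloth : ∀ m : Fin n, m ≠ A → m ≠ B → m ≠ D →
          (if 3*c ≤ (m:ℕ) ∧ (m:ℕ) < 3*c+3 then t m else 1) = 1 := by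
        intro m h1 h2 h3
        rw [if_neg ?_]
        intro hcond
        have hm3 : (m:ℕ) = 3*c ∨ (m:ℕ) = 3*c+1 ∨ (m:ℕ) = 3*c+2 := by omega
        rcases hm3 with h | h | h
        · exact h1 (Fin.ext (by rw [h, hAco]))
        · exact h2 (Fin.ext (by rw [h, hBco]))
        · exact h3 (Fin.ext (by rw [h, hDco]))
      have hAB : A ≠ B := fun h => by
        have := congrArg Fin.val h
        rw [hAco, hBco] at this
        omega
      have hAD : A ≠ D := fun h => by
        have := congrArg Fin.val h
        rw [hAco, hDco] at this
        omega
      have hBD : B ≠ D := fun h => by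
        have := congrArg Fin.val h
        rw [hBco, hDco] at this
        omega
      rcases ht A with hA | hA <;> rcases ht B with hB | hB <;> rcases ht D with hD | hD
      · apply diag_one_mem_weyl _ ht2
        intro m
        show (if 3*c ≤ (m:ℕ) ∧ (m:ℕ) < 3*c+3 then t m else 1) = 1
        by_cases h1 : m = A
        · rw [h1, hvalA, hA]
        · by_cases h2 : m = B
          · rw [h2, hvalB, hB]
          · by_cases h3 : m = D
            · rw [h3, hvalD, hD]
            · exact hvaloth m h1 h2 h3
      · rw [hA, hB, hD] at hABD; norm_num at hABD
      · rw [hA, hB, hD] at hABD; norm_num at hABD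
      · apply diag_pair_mem_weyl B D hBD _ ht2
        · show (if 3*c ≤ (B:ℕ) ∧ (B:ℕ) < 3*c+3 then t B else 1) = -1
          rw [hvalB, hB]
        · show (if 3*c ≤ (D:ℕ) ∧ (D:ℕ) < 3*c+3 then t D else 1) = -1
          rw [hvalD, hD]
        · intro m h2 h3
          show (if 3*c ≤ (m:ℕ) ∧ (m:ℕ) < 3*c+3 then t m else 1) = 1
          by_cases h1 : m = A
          · rw [h1, hvalA, hA]
          · exact hvaloth m h1 h2 h3
      · rw [hA, hB, hD] at hABD; norm_num at hABD
      · apply diag_pair_mem_weyl A D hAD _ ht2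
        · show (if 3*c ≤ (A:ℕ) ∧ (A:ℕ) < 3*c+3 then t A else 1) = -1
          rw [hvalA, hA]
        · show (if 3*c ≤ (D:ℕ) ∧ (D:ℕ) < 3*c+3 then t D else 1) = -1
          rw [hvalD, hD]
        · intro m h1 h3
          show (if 3*c ≤ (m:ℕ) ∧ (m:ℕ) < 3*c+3 then t m else 1) = 1
          by_cases h2 : m = B
          · rw [h2, hvalB, hB]
          · exact hvaloth m h1 h2 h3
      · apply diag_pair_mem_weyl A B hAB _ ht2
        · show (if 3*c ≤ (A:ℕ) ∧ (A:ℕ) < 3*c+3 then t A else 1) = -1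
          rw [hvalA, hA]
        · show (if 3*c ≤ (B:ℕ) ∧ (B:ℕ) < 3*c+3 then t B else 1) = -1
          rw [hvalB, hB]
        · intro m h1 h2
          show (if 3*c ≤ (m:ℕ) ∧ (m:ℕ) < 3*c+3 then t m else 1) = 1
          by_cases h3 : m = D
          · rw [h3, hvalD, hD]
          · exact hvaloth m h1 h2 h3
      · rw [hA, hB, hD] at hABD; norm_num at hABD
lemma canon (_hn : 5 ≤ n) {s : Fin n → ℤ} {π : Equiv.Perm (Fin n)} (hs : Sgn s)
    (hval : Valid s π) (hπ1 : π ≠ 1) :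
    ∃ (c : ℕ) (h3c : 3*c ≤ n), 1 ≤ c ∧ π.support.card = 3*c ∧
      ∃ w : AddAut ↥(DnS n), w ∈ WeylGrp (rootF (DnS n)) ∧
        mkIso s π hs = w * mkIso (fun _ => 1) (pcPerm c h3c) sgn_one * w⁻¹ := by
  obtain ⟨hrep, hcard⟩ := cycleType_of_valid (fun m => (hval m).1)
  set c := Multiset.card π.cycleType with hcdef
  have h3c : 3*c ≤ n := by
    have h1 := Finset.card_le_univ π.support
    simp only [Finset.card_univ, Fintype.card_fin] at h1
    omega
  have hc1 : 1 ≤ c := by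
    by_contra hc
    have hc0 : c = 0 := by omega
    rw [hc0] at hcard
    exact hπ1 (Equiv.Perm.support_eq_empty_iff.1 (Finset.card_eq_zero.1 (by omega)))
  obtain ⟨hrep2, hcard2⟩ := cycleType_of_valid (fun m => (pc_valid h3c m).1)
  have hc2 : Multiset.card (pcPerm c h3c).cycleType = c := by
    have := pc_support_card h3c
    omega
  have hctype : (pcPerm c h3c).cycleType = π.cycleType := by
    rw [hrep2, hrep, hc2]
  obtain ⟨σ, hσ⟩ := isConj_iff.1 (Equiv.Perm.isConj_iff_cycleType_eq.2 hctype)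
  set sh : Fin n → ℤ := fun m => s (σ m) with hshdef
  have hsh : Sgn sh := hs.comp σ
  have hcm : ∀ m, σ (pcPerm c h3c m) = π (σ m) := by
    intro m
    rw [← hσ]
    show σ (pcPerm c h3c m) = σ (pcPerm c h3c (σ⁻¹ (σ m)))
    rw [show σ⁻¹ (σ m) = m from σ.symm_apply_apply m]
  have hvalsh : Valid sh (pcPerm c h3c) := by
    intro m
    refine ⟨(pc_valid h3c m).1, ?_⟩
    show s (σ (pcPerm c h3c (pcPerm c h3c m))) * s (σ (pcPerm c h3c m)) * s (σ m) = 1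
    rw [hcm (pcPerm c h3c m), hcm m]
    exact (hval (σ m)).2
  -- the sign-fixing diagonal
  set t : Fin n → ℤ := fun m => if (m:ℕ) < 3*c then
      (if (m:ℕ)%3 = 1 then sh (pcPerm c h3c (pcPerm c h3c m)) * sh m
        else sh (pcPerm c h3c m)) else 1 with htdef
  have ht_out : ∀ m : Fin n, ¬((m:ℕ) < 3*c) → t m = 1 := fun m hm => if_neg hm
  have ht_lt1 : ∀ m : Fin n, (m:ℕ) < 3*c → (m:ℕ)%3 = 1 →
      t m = sh (pcPerm c h3c (pcPerm c h3c m)) * sh m := by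
    intro m h h1
    show (if (m:ℕ) < 3*c then _ else _) = _
    rw [if_pos h, if_pos h1]
  have ht_lt0 : ∀ m : Fin n, (m:ℕ) < 3*c → ¬((m:ℕ)%3 = 1) →
      t m = sh (pcPerm c h3c m) := by
    intro m h h1
    show (if (m:ℕ) < 3*c then _ else _) = _
    rw [if_pos h, if_neg h1]
  have htS : Sgn t := by
    intro m
    by_cases h : (m:ℕ) < 3*c
    · by_cases h1 : (m:ℕ)%3 = 1
      · rw [ht_lt1 m h h1]
        rcases hsh (pcPerm c h3c (pcPerm c h3c m)) with e | e <;> rcases hsh m with e' | e' <;>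
          rw [e, e'] <;> norm_num
      · rw [ht_lt0 m h h1]
        exact hsh _
    · rw [ht_out m h]
      exact Or.inl rfl
  have hF1 : ∀ a : Fin n, ¬((a:ℕ) < 3*c) → pcPerm c h3c a = a :=
    fun a ha => Fin.ext (pcf_of_ge ha)
  have hF2lt : ∀ a : Fin n, (a:ℕ) < 3*c → ((pcPerm c h3c a : Fin n):ℕ) < 3*c := by
    intro a ha
    rw [pcPerm_coe]
    exact pcf_lt_3c ha
  have hF2mod : ∀ a : Fin n, (a:ℕ) < 3*c →
      ((pcPerm c h3c a : Fin n):ℕ)%3 = ((a:ℕ)%3+1)%3 := by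
    intro a ha
    rw [pcPerm_coe, pcf_of_lt ha]
    omega
  have hF3 : ∀ a : Fin n, pcPerm c h3c (pcPerm c h3c (pcPerm c h3c a)) = a :=
    fun a => (pc_valid h3c a).1
  have hts : ∀ i : Fin n, t (pcPerm c h3c i) * t i = sh i := by
    intro i
    by_cases hi : (i:ℕ) < 3*c
    · have hb := hF2lt i hi
      have hbm := hF2mod i hi
      rcases (by omega : (i:ℕ)%3 = 0 ∨ (i:ℕ)%3 = 1 ∨ (i:ℕ)%3 = 2) with h0 | h1 | h2
      · rw [ht_lt1 (pcPerm c h3c i) hb (by omega), ht_lt0 i hi (by omega), hF3 i]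
        linear_combination (sh i) * (hsh.sq (pcPerm c h3c i))
      · rw [ht_lt0 (pcPerm c h3c i) hb (by omega), ht_lt1 i hi (by omega)]
        linear_combination (sh i) * (hsh.sq (pcPerm c h3c (pcPerm c h3c i)))
      · rw [ht_lt0 (pcPerm c h3c i) hb (by omega), ht_lt0 i hi (by omega)]
        linear_combination (sh i) * (hvalsh i).2 -
          (sh (pcPerm c h3c (pcPerm c h3c i)) * sh (pcPerm c h3c i)) * (hsh.sq i)
    · rw [hF1 i hi, ht_out i hi, valid_fixed_sign hsh hvalsh (hF1 i hi)]
      norm_num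
  have hTW : mkIso t 1 htS ∈ WeylGrp (rootF (DnS n)) := by
    apply diag_blocks_mem_weyl c h3c t htS ht_out
    intro a b d ha ha0 hb hd
    have hab : pcPerm c h3c a = b := Fin.ext (by rw [pcPerm_coe, pcf_of_lt (by omega)]; omega)
    have hbd : pcPerm c h3c b = d := Fin.ext (by rw [pcPerm_coe, pcf_of_lt (by omega)]; omega)
    have hda : pcPerm c h3c d = a := Fin.ext (by rw [pcPerm_coe, pcf_of_lt (by omega)]; omega)
    rw [ht_lt0 a ha (by omega), ht_lt1 b (by omega) (by omega), ht_lt0 d (by omega) (by omega),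
      hab, hbd, hda]
    linear_combination (sh b * sh b) * (hsh.sq a) + hsh.sq b
  have hPW : mkIso (fun _ => 1) σ sgn_one ∈ WeylGrp (rootF (DnS n)) := perm_mem_weyl σ
  have hsgn1 : Sgn (fun i => t (pcPerm c h3c ((1 : Equiv.Perm (Fin n)).symm i)) *
      (fun _ : Fin n => (1:ℤ)) ((1 : Equiv.Perm (Fin n)).symm i) *
      t ((1 : Equiv.Perm (Fin n)).symm i)) := by
    intro i
    dsimp only
    rcases htS (pcPerm c h3c ((1 : Equiv.Perm (Fin n)).symm i)) with e | e <;>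
      rcases htS ((1 : Equiv.Perm (Fin n)).symm i) with e' | e' <;> rw [e, e'] <;> norm_num
  have step1 : mkIso t 1 htS * mkIso (fun _ => 1) (pcPerm c h3c) sgn_one * (mkIso t 1 htS)⁻¹
      = mkIso sh (pcPerm c h3c) hsh := by
    rw [mkIso_conj t (fun _ => 1) 1 (pcPerm c h3c) htS sgn_one hsgn1]
    refine mkIso_congr _ hsh (funext fun i => ?_) ?_
    · show t (pcPerm c h3c i) * 1 * t i = sh i
      rw [mul_one]
      exact hts i
    · show (1 : Equiv.Perm (Fin n)) * pcPerm c h3c * (1 : Equiv.Perm (Fin n)).symm = _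
      rw [one_mul]
      rfl
  have hsgn2 : Sgn (fun i => (fun _ : Fin n => (1:ℤ)) (pcPerm c h3c (σ.symm i)) *
      sh (σ.symm i) * (fun _ : Fin n => (1:ℤ)) (σ.symm i)) := by
    intro i
    dsimp only
    rcases hsh (σ.symm i) with e | e <;> rw [e] <;> norm_num
  have step2 : mkIso (fun _ => 1) σ sgn_one * mkIso sh (pcPerm c h3c) hsh *
      (mkIso (fun _ => 1) σ sgn_one)⁻¹ = mkIso s π hs := by
    rw [mkIso_conj (fun _ => 1) sh σ (pcPerm c h3c) sgn_one hsh hsgn2]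
    refine mkIso_congr _ hs (funext fun i => ?_) ?_
    · show 1 * sh (σ.symm i) * 1 = s i
      rw [one_mul, mul_one]
      show s (σ (σ.symm i)) = s i
      rw [Equiv.apply_symm_apply]
    · show σ * pcPerm c h3c * σ.symm = π
      rw [← hσ]
      rfl
  refine ⟨c, h3c, hc1, hcard, mkIso (fun _ => 1) σ sgn_one * mkIso t 1 htS,
    mul_mem hPW hTW, ?_⟩
  rw [← step2, ← step1]
  group
lemma fixedRank_conj {L : Type*} [AddCommGroup L] (w f : AddAut L) :
    fixedRank (w * f * w⁻¹) = fixedRank f := by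
  have h0 : ∀ a : L, w⁻¹ (w a) = a := fun a => by
    have : (w⁻¹ * w) a = w⁻¹ (w a) := rfl
    rw [← this, inv_mul_cancel]
    rfl
  have h0' : ∀ a : L, w (w⁻¹ a) = a := fun a => by
    have : (w * w⁻¹) a = w (w⁻¹ a) := rfl
    rw [← this, mul_inv_cancel]
    rfl
  have happ : ∀ a : L, (w * f * w⁻¹) a = w (f (w⁻¹ a)) := fun a => rfl
  have e : ↥(fixedPts f) ≃+ ↥(fixedPts (w * f * w⁻¹)) :=
    { toFun := fun x => ⟨w x.1, by
        rw [mem_fixed_iff, happ, h0, x.2]⟩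
      invFun := fun y => ⟨w⁻¹ y.1, by
        rw [mem_fixed_iff]
        have hy : (w * f * w⁻¹) y.1 = y.1 := y.2
        rw [happ] at hy
        have := congrArg (fun z => w⁻¹ z) hy
        rw [h0] at this
        exact this⟩
      left_inv := fun x => Subtype.ext (h0 x.1)
      right_inv := fun y => Subtype.ext (h0' y.1)
      map_add' := fun x y => Subtype.ext (map_add w x.1 y.1) }
  exact (LinearEquiv.finrank_eq e.toIntLinearEquiv.symm)

lemma idx_lt {c : ℕ} (h3c : 3*c ≤ n) {j : ℕ} (hj : j < n-2*c) :
    (if j < c then 3*j else 2*c+j) < n := by split <;> omega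

/-- section of the block-collapse map -/
def idxF (c : ℕ) (h3c : 3*c ≤ n) : Fin (n-2*c) → Fin n :=
  fun j => ⟨if (j:ℕ) < c then 3*(j:ℕ) else 2*c+(j:ℕ), idx_lt h3c j.2⟩

lemma bidx_lt {c : ℕ} (h3c : 3*c ≤ n) {i : ℕ} (hi : i < n) :
    (if i < 3*c then i/3 else i - 2*c) < n - 2*c := by split <;> omega

/-- the block-collapse map -/
def bidxF (c : ℕ) (h3c : 3*c ≤ n) : Fin n → Fin (n-2*c) :=
  fun i => ⟨if (i:ℕ) < 3*c then (i:ℕ)/3 else (i:ℕ) - 2*c, bidx_lt h3c i.2⟩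

lemma bidx_idx {c : ℕ} (h3c : 3*c ≤ n) (j : Fin (n-2*c)) :
    bidxF c h3c (idxF c h3c j) = j := by
  apply Fin.ext
  show (if (if (j:ℕ) < c then 3*(j:ℕ) else 2*c+(j:ℕ)) < 3*c
    then (if (j:ℕ) < c then 3*(j:ℕ) else 2*c+(j:ℕ))/3
    else (if (j:ℕ) < c then 3*(j:ℕ) else 2*c+(j:ℕ)) - 2*c) = (j:ℕ)
  split <;> split <;> omega

lemma bidx_pc {c : ℕ} (h3c : 3*c ≤ n) (j : Fin n) :
    bidxF c h3c (pcPerm c h3c j) = bidxF c h3c j := by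
  apply Fin.ext
  show (if (pcf c (j:ℕ)) < 3*c then (pcf c (j:ℕ))/3 else (pcf c (j:ℕ)) - 2*c) =
    (if (j:ℕ) < 3*c then (j:ℕ)/3 else (j:ℕ) - 2*c)
  by_cases hj : (j:ℕ) < 3*c
  · have h1 := pcf_of_lt (c := c) hj
    have h2 := pcf_lt_3c (c := c) hj
    rw [if_pos h2, if_pos hj]
    omega
  · rw [pcf_of_ge hj]

lemma pc_fix_iff {c : ℕ} (h3c : 3*c ≤ n) (x : ↥(DnS n)) :
    x ∈ fixedPts (mkIso (fun _ => 1) (pcPerm c h3c) sgn_one) ↔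
      ∀ j, x.1 (pcPerm c h3c j) = x.1 j := by
  rw [mem_fixed_iff]
  constructor
  · intro h j
    have h1 := congrArg (fun z : ↥(DnS n) => z.1 (pcPerm c h3c j)) h
    have h2 : (mkIso (fun _ => 1) (pcPerm c h3c) sgn_one x).1 (pcPerm c h3c j) =
        1 * x.1 ((pcPerm c h3c).symm (pcPerm c h3c j)) := rfl
    rw [h2, one_mul, Equiv.symm_apply_apply] at h1
    exact h1.symm
  · intro h
    apply Subtype.ext
    funext j
    show (1:ℤ) * x.1 ((pcPerm c h3c).symm j) = x.1 j
    rw [one_mul]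
    have h1 := h ((pcPerm c h3c).symm j)
    rw [Equiv.apply_symm_apply] at h1
    exact h1.symm

/-- restriction of coordinates to a transversal -/
def Amap (c : ℕ) (h3c : 3*c ≤ n) :
    ↥(fixedPts (mkIso (fun _ => (1:ℤ)) (pcPerm c h3c) sgn_one)) →+ (Fin (n-2*c) → ℤ) :=
  AddMonoidHom.mk' (fun x => fun j => (x.1 : Fin n → ℤ) (idxF c h3c j)) (fun a b => rfl)

lemma Bmem {c : ℕ} (h3c : 3*c ≤ n) (y : Fin (n-2*c) → ℤ) :
    (fun i => 2 * y (bidxF c h3c i)) ∈ DnS n := by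
  rw [mem_DnS]
  exact Finset.dvd_sum fun i _ => Dvd.intro _ rfl

lemma Bfix {c : ℕ} (h3c : 3*c ≤ n) (y : Fin (n-2*c) → ℤ) :
    (⟨fun i => 2 * y (bidxF c h3c i), Bmem h3c y⟩ : ↥(DnS n)) ∈
      fixedPts (mkIso (fun _ => (1:ℤ)) (pcPerm c h3c) sgn_one) := by
  rw [pc_fix_iff h3c]
  intro j
  show 2 * y (bidxF c h3c (pcPerm c h3c j)) = 2 * y (bidxF c h3c j)
  rw [bidx_pc]

/-- doubled inclusion of the transversal lattice into the fixed lattice -/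
def Bmap (c : ℕ) (h3c : 3*c ≤ n) :
    (Fin (n-2*c) → ℤ) →+ ↥(fixedPts (mkIso (fun _ => (1:ℤ)) (pcPerm c h3c) sgn_one)) :=
  AddMonoidHom.mk' (fun y => ⟨⟨fun i => 2 * y (bidxF c h3c i), Bmem h3c y⟩, Bfix h3c y⟩)
    (fun a b => Subtype.ext (Subtype.ext (funext fun i => by
      show 2 * (a + b) (bidxF c h3c i) = 2 * a (bidxF c h3c i) + 2 * b (bidxF c h3c i)
      rw [Pi.add_apply]
      ring)))

lemma Amap_inj {c : ℕ} (h3c : 3*c ≤ n) : Function.Injective (Amap c h3c) := by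
  rw [injective_iff_map_eq_zero]
  intro x hx0
  have hx := (pc_fix_iff h3c x.1).1 x.2
  have hxv : ∀ j : Fin (n-2*c), (x.1 : Fin n → ℤ) (idxF c h3c j) = 0 :=
    fun j => congrFun hx0 j
  apply Subtype.ext
  apply Subtype.ext
  funext i
  show (x.1 : Fin n → ℤ) i = 0
  have hstep : ∀ a b : Fin n, (a:ℕ) < 3*c → (b:ℕ) = (a:ℕ)+1 → ((a:ℕ)%3 = 0 ∨ (a:ℕ)%3 = 1) →
      (x.1 : Fin n → ℤ) b = (x.1 : Fin n → ℤ) a := by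
    intro a b ha hb hm
    have h1 := hx a
    rw [show pcPerm c h3c a = b from Fin.ext (by rw [pcPerm_coe, pcf_of_lt ha]; omega)] at h1
    exact h1
  by_cases hi : (i:ℕ) < 3*c
  · have hic : (i:ℕ)/3 < c := by omega
    set j0 : Fin (n-2*c) := ⟨(i:ℕ)/3, by omega⟩ with hj0def
    have hj0c : (j0:ℕ) = (i:ℕ)/3 := rfl
    have hidx : ((idxF c h3c j0 : Fin n):ℕ) = 3*((i:ℕ)/3) := by
      show (if (j0:ℕ) < c then 3*(j0:ℕ) else 2*c+(j0:ℕ)) = _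
      rw [if_pos (by rw [hj0c]; exact hic)]
      try rw [hj0c]
    have hbase := hxv j0
    set b0 : Fin n := idxF c h3c j0 with hb0def
    rcases (by omega : (i:ℕ)%3 = 0 ∨ (i:ℕ)%3 = 1 ∨ (i:ℕ)%3 = 2) with h0 | h1 | h2
    · rw [show i = b0 from Fin.ext (by rw [hidx]; omega)]
      exact hbase
    · rw [hstep b0 i (by omega) (by omega) (by omega)]
      exact hbase
    · have hb1 : 3*((i:ℕ)/3)+1 < n := by omega
      set b1 : Fin n := ⟨3*((i:ℕ)/3)+1, hb1⟩ with hb1def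
      rw [hstep b1 i (by show 3*((i:ℕ)/3)+1 < 3*c; omega)
        (by show (i:ℕ) = 3*((i:ℕ)/3)+1+1; omega)
        (by show (3*((i:ℕ)/3)+1)%3 = 0 ∨ (3*((i:ℕ)/3)+1)%3 = 1; omega)]
      rw [hstep b0 b1 (by omega) (by rw [hidx]) (by rw [hidx]; omega)]
      exact hbase
  · set j0 : Fin (n-2*c) := ⟨(i:ℕ)-2*c, by omega⟩ with hj0def
    have hidx : idxF c h3c j0 = i := by
      apply Fin.ext
      show (if ((i:ℕ)-2*c) < c then 3*((i:ℕ)-2*c) else 2*c+((i:ℕ)-2*c)) = (i:ℕ)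
      rw [if_neg (by omega)]
      omega
    rw [← hidx]
    exact hxv j0

lemma Bmap_inj {c : ℕ} (h3c : 3*c ≤ n) : Function.Injective (Bmap c h3c) := by
  rw [injective_iff_map_eq_zero]
  intro y hy0
  funext j
  have h1 := congrArg
    (fun z : ↥(fixedPts (mkIso (fun _ => (1:ℤ)) (pcPerm c h3c) sgn_one)) =>
      (z.1 : Fin n → ℤ) (idxF c h3c j)) hy0
  have h2 : (2:ℤ) * y (bidxF c h3c (idxF c h3c j)) = 0 := h1
  rw [bidx_idx] at h2
  show y j = 0
  omega

lemma canon_rank {c : ℕ} (h3c : 3*c ≤ n) :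
    fixedRank (mkIso (fun _ => 1) (pcPerm c h3c) sgn_one) + 2*c = n := by
  haveI : IsNoetherian ℤ ↥(fixedPts (mkIso (fun _ => (1:ℤ)) (pcPerm c h3c) sgn_one)) := by
    refine isNoetherian_of_injective
      (AddMonoidHom.mk'
        (fun x : ↥(fixedPts (mkIso (fun _ => (1:ℤ)) (pcPerm c h3c) sgn_one)) =>
          (x.1 : Fin n → ℤ))
        (fun a b => rfl)).toIntLinearMap ?_
    intro x y h
    exact Subtype.ext (Subtype.ext h)
  have hA := LinearMap.finrank_le_finrank_of_injective
    (f := (Amap c h3c).toIntLinearMap) (Amap_inj h3c)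
  have hB := LinearMap.finrank_le_finrank_of_injective
    (f := (Bmap c h3c).toIntLinearMap) (Bmap_inj h3c)
  simp only [Module.finrank_pi, Fintype.card_fin] at hA hB
  show Module.finrank ℤ ↥(fixedPts (mkIso (fun _ => (1:ℤ)) (pcPerm c h3c) sgn_one)) + 2*c = n
  omega
lemma main_canon (hn : 5 ≤ n) (ε : ↥(IsometryGrp (rootF (DnS n)))) (hord : orderOf ε = 3) :
    (ε : AddAut ↥(DnS n)) ∈ WeylGrp (rootF (DnS n)) ∧
    ∃ (c : ℕ) (h3c : 3*c ≤ n), 1 ≤ c ∧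
      fixedRank (ε : AddAut ↥(DnS n)) + 2*c = n ∧
      ∃ w ∈ WeylGrp (rootF (DnS n)),
        (ε : AddAut ↥(DnS n)) = w * mkIso (fun _ => 1) (pcPerm c h3c) sgn_one * w⁻¹ := by
  obtain ⟨s, π, hs, hfeq⟩ := classify hn (ε : AddAut ↥(DnS n)) (mem_iso_iff.1 ε.2)
  have h3 : ε^3 = 1 := by rw [← hord]; exact pow_orderOf_eq_one ε
  have hcube : (ε : AddAut ↥(DnS n))^3 = 1 := by
    have := congrArg (fun z : ↥(IsometryGrp (rootF (DnS n))) => (z : AddAut ↥(DnS n))) h3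
    simpa using this
  rw [hfeq] at hcube
  have hmul : mkIso s π hs * mkIso s π hs * mkIso s π hs = 1 := by
    rw [show mkIso s π hs * mkIso s π hs * mkIso s π hs = (mkIso s π hs)^3 by rw [pow_succ, pow_succ, pow_one], hcube]
  have hval := cube_data hmul
  have hπ1 : π ≠ 1 := by
    intro hp1
    have hs1 : s = fun _ => 1 := funext fun m => valid_fixed_sign hs hval (by rw [hp1]; rfl)
    have hε1 : (ε : AddAut ↥(DnS n)) = 1 := by
      rw [hfeq, mkIso_congr hs sgn_one hs1 hp1, mkIso_one]
    have hee : ε = 1 := Subtype.ext hε1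
    rw [hee, orderOf_one] at hord
    omega
  obtain ⟨c, h3c, hc1, hcard, w, hwW, hconj⟩ := canon hn hs hval hπ1
  refine ⟨by rw [hfeq]; exact valid_mem_weyl hs hval, c, h3c, hc1, ?_, w, hwW,
    by rw [hfeq, hconj]⟩
  rw [hfeq, hconj, fixedRank_conj]
  exact canon_rank h3c
end Dn8

/-- Let `n ≥ 5` and `ε ∈ Aut Dₙ` of order 3.  Then `ε ∈ W(Dₙ)` and
`rank Dₙ^ε = n − 2c` for some `1 ≤ c ≤ n/3`; moreover any two order-3 automorphisms
with the same fixed-point rank are conjugate by an element of `W(Dₙ)`. -/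
theorem stmt8 (n : ℕ) (hn : 5 ≤ n)
    (ε : ↥(IsometryGrp (rootF (DnS n)))) (hord : orderOf ε = 3) :
    ((ε : AddAut ↥(DnS n)) ∈ WeylGrp (rootF (DnS n)) ∧
      ∃ c : ℕ, 1 ≤ c ∧ 3 * c ≤ n ∧
        fixedRank (ε : AddAut ↥(DnS n)) + 2 * c = n) ∧
    (∀ ε₁ ε₂ : ↥(IsometryGrp (rootF (DnS n))), orderOf ε₁ = 3 → orderOf ε₂ = 3 →
      fixedRank (ε₁ : AddAut ↥(DnS n)) = fixedRank (ε₂ : AddAut ↥(DnS n)) →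
      ∃ w ∈ WeylGrp (rootF (DnS n)),
        w⁻¹ * (ε₁ : AddAut ↥(DnS n)) * w = (ε₂ : AddAut ↥(DnS n))) := by
  constructor
  · obtain ⟨hW, c, h3c, hc1, hrank, -⟩ := Dn8.main_canon hn ε hord
    exact ⟨hW, c, hc1, h3c, hrank⟩
  · intro ε₁ ε₂ h1 h2 hrk
    obtain ⟨-, c₁, h3c₁, -, hr₁, w₁, hw₁, he₁⟩ := Dn8.main_canon hn ε₁ h1
    obtain ⟨-, c₂, h3c₂, -, hr₂, w₂, hw₂, he₂⟩ := Dn8.main_canon hn ε₂ h2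
    have hceq : c₁ = c₂ := by omega
    subst hceq
    have hEeq : Dn8.mkIso (fun _ => 1) (Dn8.pcPerm c₁ h3c₂) Dn8.sgn_one =
        Dn8.mkIso (fun _ => 1) (Dn8.pcPerm c₁ h3c₁) Dn8.sgn_one := rfl
    rw [hEeq] at he₂
    refine ⟨w₁ * w₂⁻¹, mul_mem hw₁ (inv_mem hw₂), ?_⟩
    rw [he₁, he₂]
    group
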